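/- Let T_1 and T_2 be tree-algebras, each with at least two elements, and let F_1 and F_2 be their associated forest-algebras. Then dis(T_1,T_2) = dis(F_1,F_2). -/

import Mathlib

/-- A monounary algebra: a type equipped with one unary operation. -/
structure MonoUnary : Type 1 where
  carrier : Type
  op : carrier → carrier

namespace MonoUnary

/-- The subalgebra of `A` generated by `X`: the closure of `X` under the operation. -/
def closure (A : MonoUnary) (X : Set A.carrier) : Set A.carrier :=
  {y | ∃ x ∈ X, ∃ n : ℕ, A.op^[n] x = y}

/-- Isomorphism of monounary algebras. -/
def Iso (A B : MonoUnary) : Prop :=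
  ∃ e : A.carrier ≃ B.carrier, ∀ x, e (A.op x) = B.op (e x)

/-- The monounary algebra induced on a subset closed under the operation. -/
def restrict (B : MonoUnary) (S : Set B.carrier) (hS : ∀ x ∈ S, B.op x ∈ S) : MonoUnary where
  carrier := ↥S
  op := fun x => ⟨B.op x.1, hS x.1 x.2⟩

/-- `A` is largely embeddable into `B`: `B` has a large subalgebra isomorphic to `A`,
i.e. a (nonempty, closed) subset `S` such that together with one extra element `b`
it generates the whole of `B`. -/
def LargeEmb (A B : MonoUnary) : Prop :=
  ∃ (S : Set B.carrier) (hS : ∀ x ∈ S, B.op x ∈ S), S.Nonempty ∧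
    Iso A (B.restrict S hS) ∧ ∃ b : B.carrier, B.closure (S ∪ {b}) = Set.univ

/-- One step in the network of large embeddings (symmetric closure of `⋖`). -/
def Step (A B : MonoUnary) : Prop := LargeEmb A B ∨ LargeEmb B A

/-- There is a path of length `n` between `A` and `B` in the network. -/
def HasPath (A B : MonoUnary) (n : ℕ) : Prop :=
  ∃ C : ℕ → MonoUnary, Iso (C 0) A ∧ Iso (C n) B ∧ ∀ i < n, Step (C i) (C (i + 1))

/-- The generator distance between monounary algebras, in `ℕ ∪ {∞}`. -/
noncomputable def dis (A B : MonoUnary) : ℕ∞ :=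
  sInf {q : ℕ∞ | ∃ n : ℕ, q = (n : ℕ∞) ∧ HasPath A B n}

/-- The minimum number of generators of `A`, `∞` if `A` is not finitely generated. -/
noncomputable def MGen (A : MonoUnary) : ℕ∞ :=
  sInf {q : ℕ∞ | ∃ X : Finset A.carrier, q = (X.card : ℕ∞) ∧ A.closure ↑X = Set.univ}

/-- A monounary algebra is connected iff any two elements have trajectories that meet. -/
def Connected (A : MonoUnary) : Prop :=
  ∀ a b : A.carrier, ∃ k m : ℕ, A.op^[k] a = A.op^[m] b

end MonoUnary

namespace MonoUnary

/-- The associated forest-algebra of a tree-algebra `T` with root `c` (a fixed point of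
the operation): underlying set `T \ {c}`, with `f'(x) = x` if `f x = c` and
`f'(x) = f x` otherwise. -/
noncomputable def forestOf (T : MonoUnary) (c : T.carrier) : MonoUnary where
  carrier := {x : T.carrier // x ≠ c}
  op := fun x =>
    letI : DecidableEq T.carrier := Classical.decEq _
    if h : T.op x.1 = c then x else ⟨T.op x.1, h⟩

end MonoUnary

namespace MonoUnary

section Basic

/-- iterate commutes with a homomorphism equivalence -/
theorem iso_iterate {A B : MonoUnary} (e : A.carrier ≃ B.carrier)
    (he : ∀ x, e (A.op x) = B.op (e x)) (n : ℕ) (x : A.carrier) :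
    e (A.op^[n] x) = B.op^[n] (e x) := by
  induction n with
  | zero => simp
  | succ n ih =>
    rw [Function.iterate_succ_apply', Function.iterate_succ_apply', he, ih]

theorem Iso.refl (A : MonoUnary) : Iso A A := ⟨Equiv.refl _, fun _ => rfl⟩

theorem Iso.symm {A B : MonoUnary} (h : Iso A B) : Iso B A := by
  obtain ⟨e, he⟩ := h
  refine ⟨e.symm, fun y => ?_⟩
  apply e.injective
  rw [Equiv.apply_symm_apply, he, Equiv.apply_symm_apply]

theorem Iso.trans {A B C : MonoUnary} (h : Iso A B) (h' : Iso B C) : Iso A C := by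
  obtain ⟨e, he⟩ := h; obtain ⟨f, hf⟩ := h'
  exact ⟨e.trans f, fun x => by simp [he, hf]⟩

theorem restrict_iterate {B : MonoUnary} {S : Set B.carrier}
    (hS : ∀ x ∈ S, B.op x ∈ S) (n : ℕ) (x : ↥S) :
    ((B.restrict S hS).op^[n] x).1 = B.op^[n] x.1 := by
  induction n with
  | zero => rfl
  | succ n ih =>
    rw [Function.iterate_succ_apply', Function.iterate_succ_apply' (B.restrict S hS).op n x, ← ih]
    rfl

theorem largeEmb_self (A : MonoUnary) (h : Nonempty A.carrier) : LargeEmb A A := by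
  obtain ⟨a⟩ := h
  refine ⟨Set.univ, fun x _ => trivial, ⟨a, trivial⟩,
    ⟨(Equiv.Set.univ _).symm, fun x => rfl⟩, a, ?_⟩
  exact Set.eq_univ_iff_forall.2 fun y => ⟨y, Or.inl trivial, 0, rfl⟩

theorem step_self (A : MonoUnary) (h : Nonempty A.carrier) : Step A A :=
  Or.inl (largeEmb_self A h)

end Basic

section Per

/-- `x` is a periodic element -/
def per (A : MonoUnary) (x : A.carrier) : Prop := ∃ k, 0 < k ∧ A.op^[k] x = x

/-- all elements are periodic -/
def AllPer (A : MonoUnary) : Prop := ∀ x, per A x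

theorem per.map {A : MonoUnary} {x : A.carrier} (h : per A x) (n : ℕ) :
    per A (A.op^[n] x) := by
  obtain ⟨k, hk, hkx⟩ := h
  refine ⟨k, hk, ?_⟩
  rw [← Function.iterate_add_apply, Nat.add_comm, Function.iterate_add_apply, hkx]

theorem per_iso {A B : MonoUnary} (e : A.carrier ≃ B.carrier)
    (he : ∀ x, e (A.op x) = B.op (e x)) (x : A.carrier) :
    per A x ↔ per B (e x) := by
  constructor
  · rintro ⟨k, hk, hkx⟩
    exact ⟨k, hk, by rw [← iso_iterate e he, hkx]⟩
  · rintro ⟨k, hk, hkx⟩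
    refine ⟨k, hk, e.injective ?_⟩
    rw [iso_iterate e he, hkx]

theorem per_restrict {B : MonoUnary} {S : Set B.carrier}
    (hS : ∀ x ∈ S, B.op x ∈ S) (x : ↥S) :
    per (B.restrict S hS) x ↔ per B x.1 := by
  constructor
  · rintro ⟨k, hk, hkx⟩
    exact ⟨k, hk, by rw [← restrict_iterate hS, hkx]⟩
  · rintro ⟨k, hk, hkx⟩
    refine ⟨k, hk, Subtype.ext ?_⟩
    rw [restrict_iterate hS, hkx]

theorem allPer_iso {A B : MonoUnary} (h : Iso A B) : AllPer A ↔ AllPer B := by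
  obtain ⟨e, he⟩ := h
  constructor
  · intro hA y
    have := (per_iso e he (e.symm y)).1 (hA _)
    rwa [e.apply_symm_apply] at this
  · intro hB x
    exact (per_iso e he x).2 (hB _)

/-- a tree: periodic iff root -/
theorem per_tree {T : MonoUnary} (hT : Connected T) {c : T.carrier} (hc : T.op c = c)
    (x : T.carrier) : per T x ↔ x = c := by
  constructor
  · rintro ⟨k, hk, hkx⟩
    obtain ⟨a, m, ham⟩ := hT x c
    rw [Function.iterate_fixed hc] at ham
    -- x = T.op^[k*a] x, and k*a ≥ a
    have hiter : ∀ n : ℕ, T.op^[k * n] x = x := by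
      intro n
      induction n with
      | zero => rfl
      | succ n ih => rw [Nat.mul_succ, Nat.add_comm, Function.iterate_add_apply, ih, hkx]
    have hka : a ≤ k * a := Nat.le_mul_of_pos_left a hk
    calc x = T.op^[k * a] x := (hiter a).symm
      _ = T.op^[k * a - a] (T.op^[a] x) := by
          rw [← Function.iterate_add_apply, Nat.sub_add_cancel hka]
      _ = c := by rw [ham, Function.iterate_fixed hc]
  · rintro rfl
    exact ⟨1, Nat.one_pos, by simp [hc]⟩

theorem not_allPer_tree {T : MonoUnary} (hT : Connected T) {c : T.carrier}
    (hc : T.op c = c) (hcard : ∃ x : T.carrier, x ≠ c) : ¬ AllPer T := by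
  obtain ⟨x, hx⟩ := hcard
  intro h
  exact hx ((per_tree hT hc x).1 (h x))

end Per

end MonoUnary
namespace MonoUnary

/-- the generalized associated forest: nonperiodic elements, with trajectories cut
before periodic elements -/
noncomputable def gforest (B : MonoUnary) : MonoUnary where
  carrier := {x : B.carrier // ¬ per B x}
  op := fun x =>
    letI : Decidable (per B (B.op x.1)) := Classical.propDecidable _
    if h : per B (B.op x.1) then x else ⟨B.op x.1, h⟩

/-- disjoint union of two monounary algebras -/
def msum (X Y : MonoUnary) : MonoUnary where
  carrier := X.carrier ⊕ Y.carrier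
  op := Sum.elim (fun x => Sum.inl (X.op x)) (fun y => Sum.inr (Y.op y))

/-- adding a root below all fixed points -/
noncomputable def tplus (X : MonoUnary) : MonoUnary where
  carrier := Option X.carrier
  op := fun o =>
    Option.casesOn o none (fun x =>
      letI : Decidable (X.op x = x) := Classical.propDecidable _
      if X.op x = x then none else some (X.op x))

/-- single-generated algebras -/
def SGen (X : MonoUnary) : Prop := ∃ b, X.closure {b} = Set.univ

theorem msum_iterate_inl (X Y : MonoUnary) (n : ℕ) (x : X.carrier) :
    (msum X Y).op^[n] (Sum.inl x) = Sum.inl (X.op^[n] x) := by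
  induction n with
  | zero => rfl
  | succ n ih => rw [Function.iterate_succ_apply' (msum X Y).op n (Sum.inl x), Function.iterate_succ_apply', ih]; rfl

theorem msum_iterate_inr (X Y : MonoUnary) (n : ℕ) (y : Y.carrier) :
    (msum X Y).op^[n] (Sum.inr y) = Sum.inr (Y.op^[n] y) := by
  induction n with
  | zero => rfl
  | succ n ih => rw [Function.iterate_succ_apply' (msum X Y).op n (Sum.inr y), Function.iterate_succ_apply', ih]; rfl

theorem sgen_nonempty {Y : MonoUnary} (h : SGen Y) : Nonempty Y.carrier := by
  obtain ⟨b, _⟩ := h; exact ⟨b⟩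

/-- X largely embeds into X ⊕ Y when Y is single-generated -/
theorem largeEmb_msum_left (X Y : MonoUnary) (hX : Nonempty X.carrier) (hY : SGen Y) :
    LargeEmb X (msum X Y) := by
  obtain ⟨y₀, hy₀⟩ := hY
  obtain ⟨x₀⟩ := hX
  refine ⟨Set.range Sum.inl, ?_, ⟨Sum.inl x₀, ⟨x₀, rfl⟩⟩, ?_, Sum.inr y₀, ?_⟩
  · rintro x ⟨x', rfl⟩; exact ⟨X.op x', rfl⟩
  · refine ⟨Equiv.ofInjective Sum.inl Sum.inl_injective, fun x => ?_⟩
    apply Subtype.ext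
    simp [restrict, msum]; rfl
  · apply Set.eq_univ_iff_forall.2
    rintro (x | y)
    · exact ⟨Sum.inl x, Or.inl ⟨x, rfl⟩, 0, rfl⟩
    · have : y ∈ Y.closure {y₀} := hy₀ ▸ Set.mem_univ y
      obtain ⟨z, hz, n, hn⟩ := this
      rcases hz with rfl
      exact ⟨Sum.inr z, Or.inr rfl, n, by rw [msum_iterate_inr, hn]⟩

/-- Y largely embeds into X ⊕ Y when X is single-generated -/
theorem largeEmb_msum_right (X Y : MonoUnary) (hY : Nonempty Y.carrier) (hX : SGen X) :
    LargeEmb Y (msum X Y) := by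
  obtain ⟨x₀, hx₀⟩ := hX
  obtain ⟨y₀⟩ := hY
  refine ⟨Set.range Sum.inr, ?_, ⟨Sum.inr y₀, ⟨y₀, rfl⟩⟩, ?_, Sum.inl x₀, ?_⟩
  · rintro x ⟨x', rfl⟩; exact ⟨Y.op x', rfl⟩
  · refine ⟨Equiv.ofInjective Sum.inr Sum.inr_injective, fun x => ?_⟩
    apply Subtype.ext
    simp [restrict, msum]; rfl
  · apply Set.eq_univ_iff_forall.2
    rintro (x | y)
    · have : x ∈ X.closure {x₀} := hx₀ ▸ Set.mem_univ x
      obtain ⟨z, hz, n, hn⟩ := this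
      rcases hz with rfl
      exact ⟨Sum.inl z, Or.inr rfl, n, by rw [msum_iterate_inl, hn]⟩
    · exact ⟨Sum.inr y, Or.inl ⟨y, rfl⟩, 0, rfl⟩

end MonoUnary
namespace MonoUnary

theorem gforest_op_pos {B : MonoUnary} (x : (gforest B).carrier)
    (h : per B (B.op x.1)) : (gforest B).op x = x := by
  simp only [gforest]
  exact dif_pos h

theorem gforest_op_neg {B : MonoUnary} (x : (gforest B).carrier)
    (h : ¬ per B (B.op x.1)) : (gforest B).op x = ⟨B.op x.1, h⟩ := by
  simp only [gforest]
  exact dif_neg h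

theorem forestOf_op_pos {T : MonoUnary} {c : T.carrier} (x : (forestOf T c).carrier)
    (h : T.op x.1 = c) : (forestOf T c).op x = x := by
  simp only [forestOf]
  exact dif_pos h

theorem forestOf_op_neg {T : MonoUnary} {c : T.carrier} (x : (forestOf T c).carrier)
    (h : ¬ T.op x.1 = c) : (forestOf T c).op x = ⟨T.op x.1, h⟩ := by
  simp only [forestOf]
  exact dif_neg h

/-- if the whole forward trajectory up to n is nonperiodic then the gforest iterate
agrees with the original iterate -/
theorem gforest_iterate {B : MonoUnary} (x : B.carrier) (n : ℕ)
    (h : ∀ i ≤ n, ¬ per B (B.op^[i] x)) :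
    (gforest B).op^[n] ⟨x, h 0 (Nat.zero_le n)⟩ = ⟨B.op^[n] x, h n le_rfl⟩ := by
  induction n with
  | zero => rfl
  | succ n ih =>
    have h' : ∀ i ≤ n, ¬ per B (B.op^[i] x) := fun i hi => h i (Nat.le_succ_of_le hi)
    rw [Function.iterate_succ_apply' (gforest B).op n ⟨x, h 0 (Nat.zero_le _)⟩, ih h']
    have hne : ¬ per B (B.op (B.op^[n] x)) := by
      have heq : B.op (B.op^[n] x) = B.op^[n+1] x := (Function.iterate_succ_apply' _ _ _).symm
      rw [heq]
      exact h (n+1) le_rfl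
    rw [gforest_op_neg (B := B) ⟨B.op^[n] x, h' n le_rfl⟩ hne]
    apply Subtype.ext
    simp [Function.iterate_succ_apply']

/-- nonperiodic trajectory elements are reachable in the gforest -/
theorem gforest_reach {B : MonoUnary} (x : B.carrier) (n : ℕ)
    (hx : ¬ per B x) (hy : ¬ per B (B.op^[n] x)) :
    (gforest B).op^[n] ⟨x, hx⟩ = ⟨B.op^[n] x, hy⟩ := by
  have h : ∀ i ≤ n, ¬ per B (B.op^[i] x) := by
    intro i hi hper
    apply hy
    have : B.op^[n] x = B.op^[n - i] (B.op^[i] x) := by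
      rw [← Function.iterate_add_apply, Nat.sub_add_cancel hi]
    rw [this]
    exact hper.map _
  have := gforest_iterate x n h
  convert this using 2

theorem gforest_nonempty {B : MonoUnary} (h : ¬ AllPer B) :
    Nonempty (gforest B).carrier := by
  rw [AllPer, not_forall] at h
  obtain ⟨x, hx⟩ := h
  exact ⟨⟨x, hx⟩⟩

/-- Iso is preserved by gforest -/
theorem gforest_iso {A B : MonoUnary} (h : Iso A B) : Iso (gforest A) (gforest B) := by
  obtain ⟨e, he⟩ := h
  refine ⟨Equiv.subtypeEquiv e fun x => not_congr (per_iso e he x), fun x => ?_⟩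
  have hkey : per A (A.op x.1) ↔ per B (B.op (e x.1)) := by
    rw [← he]
    exact per_iso e he _
  by_cases hp : per A (A.op x.1)
  · rw [gforest_op_pos x hp, gforest_op_pos _ (hkey.1 hp)]
  · rw [gforest_op_neg x hp, gforest_op_neg _ (fun hq => hp (hkey.2 hq))]
    exact Subtype.ext (he x.1)

/-- the gforest of a tree is its associated forest -/
theorem gforest_tree_iso {T : MonoUnary} (hT : Connected T) {c : T.carrier}
    (hc : T.op c = c) : Iso (gforest T) (forestOf T c) := by
  refine ⟨Equiv.subtypeEquivRight fun x => not_congr (per_tree hT hc x), fun x => ?_⟩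
  by_cases hp : T.op x.1 = c
  · rw [gforest_op_pos x (by rw [hp]; exact (per_tree hT hc c).2 rfl),
      forestOf_op_pos _ hp]
  · rw [gforest_op_neg x (fun hper => hp ((per_tree hT hc _).1 hper)),
      forestOf_op_neg _ hp]
    exact Subtype.ext rfl

end MonoUnary
namespace MonoUnary

/-- anything largely embeddable into an all-periodic algebra is all-periodic -/
theorem allPer_of_largeEmb {Q P : MonoUnary} (h : LargeEmb Q P) (hP : AllPer P) :
    AllPer Q := by
  obtain ⟨S, hS, hne, ⟨e, he⟩, _⟩ := h
  intro q
  exact (per_iso e he q).2 ((per_restrict hS _).2 (hP _))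

/-- main preservation: gforest preserves large embeddings when the small side has a
nonperiodic element -/
theorem gforest_largeEmb {A B : MonoUnary} (hA : ¬ AllPer A) (h : LargeEmb A B) :
    LargeEmb (gforest A) (gforest B) := by
  obtain ⟨S, hS, hne, ⟨e, he⟩, b, hb⟩ := h
  have key : ∀ x : A.carrier, per A x ↔ per B (e x).1 :=
    fun x => (per_iso e he x).trans (per_restrict hS (e x))
  -- the subalgebra
  set S₂ : Set (gforest B).carrier := {z | z.1 ∈ S} with hS₂def
  have hS₂ : ∀ z ∈ S₂, (gforest B).op z ∈ S₂ := by
    intro z hz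
    by_cases hp : per B (B.op z.1)
    · rw [gforest_op_pos z hp]; exact hz
    · rw [gforest_op_neg z hp]; exact hS _ hz
  -- a nonperiodic element of A, giving nonemptiness
  rw [AllPer, not_forall] at hA
  obtain ⟨a₀, ha₀⟩ := hA
  have hz₀ : ¬ per B (e a₀).1 := fun hq => ha₀ ((key a₀).2 hq)
  have hS₂ne : S₂.Nonempty := ⟨⟨(e a₀).1, hz₀⟩, (e a₀).2⟩
  -- the isomorphism
  let e₂ : (gforest A).carrier ≃ ↥S₂ :=
    { toFun := fun x => ⟨⟨(e x.1).1, fun hq => x.2 ((key x.1).2 hq)⟩, (e x.1).2⟩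
      invFun := fun z => ⟨e.symm ⟨z.1.1, z.2⟩, fun hp => z.1.2 (by
        have := (key _).1 hp
        rwa [show (e (e.symm ⟨z.1.1, z.2⟩)).1 = z.1.1 from
          congrArg Subtype.val (e.apply_symm_apply _)] at this)⟩
      left_inv := fun x => by
        apply Subtype.ext
        show e.symm ⟨(e x.1).1, (e x.1).2⟩ = x.1
        rw [show (⟨(e x.1).1, (e x.1).2⟩ : ↥S) = e x.1 from rfl, e.symm_apply_apply]
      right_inv := fun z => by
        apply Subtype.ext; apply Subtype.ext
        show (e (e.symm ⟨z.1.1, z.2⟩)).1 = z.1.1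
        exact congrArg Subtype.val (e.apply_symm_apply _) }
  refine ⟨S₂, hS₂, hS₂ne, ⟨e₂, ?_⟩, ?_⟩
  · -- homomorphism property
    intro x
    have hev : (e (A.op x.1)).1 = B.op (e x.1).1 := congrArg Subtype.val (he x.1)
    have key2 : per A (A.op x.1) ↔ per B (B.op (e x.1).1) := by
      rw [← hev]; exact key _
    apply Subtype.ext
    show (e₂ ((gforest A).op x)).1 = (gforest B).op (e₂ x).1
    by_cases hp : per A (A.op x.1)
    · rw [gforest_op_pos x hp, gforest_op_pos ((e₂ x).1) (key2.1 hp)]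
    · rw [gforest_op_neg x hp, gforest_op_neg ((e₂ x).1) (fun hq => hp (key2.2 hq))]
      apply Subtype.ext
      exact hev
  · -- generation
    by_cases hbper : per B b
    · refine ⟨⟨(e a₀).1, hz₀⟩, ?_⟩
      apply Set.eq_univ_iff_forall.2
      intro z
      have : z.1 ∈ B.closure (S ∪ {b}) := hb ▸ Set.mem_univ _
      obtain ⟨x, hx, n, hn⟩ := this
      have hxnp : ¬ per B x := fun hp => z.2 (hn ▸ hp.map n)
      have hx' : x ∈ S := by
        rcases hx with hx | hx
        · exact hx
        · exact absurd (hx ▸ hbper) hxnp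
      refine ⟨⟨x, hxnp⟩, Or.inl hx', n, ?_⟩
      rw [gforest_reach x n hxnp (hn ▸ z.2)]
      exact Subtype.ext hn
    · refine ⟨⟨b, hbper⟩, ?_⟩
      apply Set.eq_univ_iff_forall.2
      intro z
      have : z.1 ∈ B.closure (S ∪ {b}) := hb ▸ Set.mem_univ _
      obtain ⟨x, hx, n, hn⟩ := this
      have hxnp : ¬ per B x := fun hp => z.2 (hn ▸ hp.map n)
      refine ⟨⟨x, hxnp⟩, ?_, n, ?_⟩
      · rcases hx with hx | hx
        · exact Or.inl hx
        · exact Or.inr (Set.mem_singleton_iff.2 (Subtype.ext hx))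
      · rw [gforest_reach x n hxnp (hn ▸ z.2)]
        exact Subtype.ext hn

/-- if an all-periodic algebra embeds largely into a non-all-periodic one,
the gforest of the big one is single-generated -/
theorem sgen_gforest {A B : MonoUnary} (hA : AllPer A) (hB : ¬ AllPer B)
    (h : LargeEmb A B) : SGen (gforest B) := by
  obtain ⟨S, hS, hne, ⟨e, he⟩, b, hb⟩ := h
  have hSper : ∀ s ∈ S, per B s := by
    intro s hs
    have := (per_iso e he (e.symm ⟨s, hs⟩)).1 (hA _)
    rw [show e (e.symm ⟨s, hs⟩) = ⟨s, hs⟩ from e.apply_symm_apply _] at this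
    exact (per_restrict hS _).1 this
  have hbnp : ¬ per B b := by
    intro hbper
    apply hB
    intro y
    have : y ∈ B.closure (S ∪ {b}) := hb ▸ Set.mem_univ _
    obtain ⟨x, hx, n, hn⟩ := this
    have hxper : per B x := by
      rcases hx with hx | hx
      · exact hSper x hx
      · exact hx ▸ hbper
    exact hn ▸ hxper.map n
  refine ⟨⟨b, hbnp⟩, ?_⟩
  apply Set.eq_univ_iff_forall.2
  intro z
  have : z.1 ∈ B.closure (S ∪ {b}) := hb ▸ Set.mem_univ _
  obtain ⟨x, hx, n, hn⟩ := this
  have hx' : x = b := by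
    rcases hx with hx | hx
    · exact absurd (hn ▸ (hSper x hx).map n) z.2
    · exact hx
  subst hx'
  refine ⟨⟨x, hbnp⟩, rfl, n, ?_⟩
  rw [gforest_reach x n hbnp (hn ▸ z.2)]
  exact Subtype.ext hn

end MonoUnary
namespace MonoUnary

theorem tplus_op_none (X : MonoUnary) : (tplus X).op none = none := rfl

theorem tplus_op_some_pos {X : MonoUnary} {x : X.carrier} (h : X.op x = x) :
    (tplus X).op (some x) = none := by
  simp only [tplus]
  exact if_pos h

theorem tplus_op_some_neg {X : MonoUnary} {x : X.carrier} (h : ¬ X.op x = x) :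
    (tplus X).op (some x) = some (X.op x) := by
  simp only [tplus]
  exact if_neg h

/-- trajectory points survive in tplus -/
theorem tplus_reach (X : MonoUnary) (x : X.carrier) (n : ℕ) :
    ∃ k, (tplus X).op^[k] (some x) = some (X.op^[n] x) := by
  induction n with
  | zero => exact ⟨0, rfl⟩
  | succ n ih =>
    obtain ⟨k, hk⟩ := ih
    by_cases h : X.op (X.op^[n] x) = X.op^[n] x
    · refine ⟨k, ?_⟩
      rw [hk, Function.iterate_succ_apply', h]
    · refine ⟨k + 1, ?_⟩
      rw [Function.iterate_succ_apply' (tplus X).op k (some x), hk, tplus_op_some_neg h,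
        Function.iterate_succ_apply']

/-- Iso is preserved by tplus -/
theorem tplus_iso {A B : MonoUnary} (h : Iso A B) : Iso (tplus A) (tplus B) := by
  obtain ⟨e, he⟩ := h
  refine ⟨Equiv.optionCongr e, fun o => ?_⟩
  cases o with
  | none => rfl
  | some x =>
    have hiff : A.op x = x ↔ B.op (e x) = e x := by
      rw [← he]
      exact ⟨fun hx => by rw [hx], fun hx => e.injective hx⟩
    by_cases hx : A.op x = x
    · rw [tplus_op_some_pos hx]
      show (none : Option B.carrier) = (tplus B).op (some (e x))
      rw [tplus_op_some_pos (hiff.1 hx)]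
    · rw [tplus_op_some_neg hx]
      show some (e (A.op x)) = (tplus B).op (some (e x))
      rw [tplus_op_some_neg (fun hq => hx (hiff.2 hq)), he]

/-- LargeEmb is preserved by tplus -/
theorem tplus_largeEmb {A B : MonoUnary} (h : LargeEmb A B) :
    LargeEmb (tplus A) (tplus B) := by
  obtain ⟨S, hS, hne, ⟨e, he⟩, b, hb⟩ := h
  set S' : Set (tplus B).carrier := (fun s => some s) '' S ∪ {none} with hS'def
  have hS' : ∀ z ∈ S', (tplus B).op z ∈ S' := by
    rintro z (⟨s, hs, rfl⟩ | hz)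
    · by_cases hfix : B.op s = s
      · rw [tplus_op_some_pos hfix]; exact Or.inr rfl
      · rw [tplus_op_some_neg hfix]; exact Or.inl ⟨B.op s, hS s hs, rfl⟩
    · rcases hz with rfl
      exact Or.inr rfl
  have hev : ∀ a, (e (A.op a)).1 = B.op (e a).1 := fun a => congrArg Subtype.val (he a)
  -- the embedding map
  let f : (tplus A).carrier → ↥S' := fun o =>
    Option.casesOn o ⟨none, Or.inr rfl⟩
      (fun a => ⟨some (e a).1, Or.inl ⟨(e a).1, (e a).2, rfl⟩⟩)
  have hfbij : Function.Bijective f := by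
    constructor
    · intro o₁ o₂ heq
      cases o₁ with
      | none =>
        cases o₂ with
        | none => rfl
        | some a => exact absurd (congrArg Subtype.val heq) (by simp [f])
      | some a =>
        cases o₂ with
        | none => exact absurd (congrArg Subtype.val heq) (by simp [f])
        | some a' =>
          have h2 : some (e a).1 = some (e a').1 := congrArg Subtype.val heq
          exact congrArg some (e.injective (Subtype.ext (Option.some.inj h2)))
    · rintro ⟨z, hz⟩
      rcases hz with ⟨s, hs, rfl⟩ | hz
      · exact ⟨some (e.symm ⟨s, hs⟩), by
          apply Subtype.ext
          show some (e (e.symm ⟨s, hs⟩)).1 = some s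
          rw [show e (e.symm ⟨s, hs⟩) = ⟨s, hs⟩ from e.apply_symm_apply _]⟩
      · rcases hz with rfl
        exact ⟨none, rfl⟩
  refine ⟨S', hS', ⟨none, Or.inr rfl⟩, ⟨Equiv.ofBijective f hfbij, ?_⟩, some b, ?_⟩
  · intro o
    apply Subtype.ext
    show (f ((tplus A).op o)).1 = (tplus B).op (f o).1
    cases o with
    | none => rfl
    | some a =>
      have hiff : A.op a = a ↔ B.op (e a).1 = (e a).1 := by
        rw [← hev]
        exact ⟨fun hx => by rw [hx], fun hx => e.injective (Subtype.ext hx)⟩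
      by_cases hfix : A.op a = a
      · rw [tplus_op_some_pos hfix]
        show (none : Option B.carrier) = (tplus B).op (some (e a).1)
        rw [tplus_op_some_pos (hiff.1 hfix)]
      · rw [tplus_op_some_neg hfix]
        show some (e (A.op a)).1 = (tplus B).op (some (e a).1)
        rw [tplus_op_some_neg (fun hq => hfix (hiff.2 hq)), hev]
  · apply Set.eq_univ_iff_forall.2
    intro z
    cases z with
    | none => exact ⟨none, Or.inl (Or.inr rfl), 0, rfl⟩
    | some y =>
      have : y ∈ B.closure (S ∪ {b}) := hb ▸ Set.mem_univ _
      obtain ⟨x, hx, n, hn⟩ := this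
      obtain ⟨k, hk⟩ := tplus_reach B x n
      refine ⟨some x, ?_, k, by rw [hk, hn]⟩
      rcases hx with hx | hx
      · exact Or.inl (Or.inl ⟨x, hx, rfl⟩)
      · exact Or.inr (Set.mem_singleton_iff.2 (by rw [hx]))

/-- tplus of the associated forest of a tree gives back the tree -/
theorem tplus_forest_iso {T : MonoUnary} (hT : Connected T) {c : T.carrier}
    (hc : T.op c = c) : Iso (tplus (forestOf T c)) T := by
  -- the map sending none to c and some x to x
  let f : (tplus (forestOf T c)).carrier → T.carrier :=
    fun o => Option.casesOn o c Subtype.val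
  have hfbij : Function.Bijective f := by
    constructor
    · intro o₁ o₂ heq
      cases o₁ with
      | none =>
        cases o₂ with
        | none => rfl
        | some a => exact absurd heq.symm a.2
      | some a =>
        cases o₂ with
        | none => exact absurd heq a.2
        | some a' => exact congrArg some (Subtype.ext heq)
    · intro t
      by_cases ht : t = c
      · exact ⟨none, ht.symm⟩
      · exact ⟨some ⟨t, ht⟩, rfl⟩
  refine ⟨Equiv.ofBijective f hfbij, fun o => ?_⟩
  show f ((tplus (forestOf T c)).op o) = T.op (f o)
  cases o with
  | none => exact hc.symm
  | some x =>
    by_cases hp : T.op x.1 = c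
    · have hfix : (forestOf T c).op x = x := forestOf_op_pos x hp
      have : (tplus (forestOf T c)).op (some x) = none := tplus_op_some_pos hfix
      rw [this]
      exact hp.symm
    · have hop : (forestOf T c).op x = ⟨T.op x.1, hp⟩ := forestOf_op_neg x hp
      have hne : (forestOf T c).op x ≠ x := by
        rw [hop]
        intro heq
        have hval : T.op x.1 = x.1 := congrArg Subtype.val heq
        exact x.2 ((per_tree hT hc x.1).1 ⟨1, Nat.one_pos, by simpa using hval⟩)
      rw [tplus_op_some_neg hne, hop]

end MonoUnary
namespace MonoUnary

theorem hasPath_of_forest_path {T₁ T₂ : MonoUnary}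
    (h₁ : Connected T₁) (h₂ : Connected T₂) {c₁ : T₁.carrier} {c₂ : T₂.carrier}
    (hc₁ : T₁.op c₁ = c₁) (hc₂ : T₂.op c₂ = c₂) (n : ℕ)
    (h : HasPath (forestOf T₁ c₁) (forestOf T₂ c₂) n) : HasPath T₁ T₂ n := by
  obtain ⟨C, h0, hn, hstep⟩ := h
  refine ⟨fun i => tplus (C i), ?_, ?_, fun i hi => ?_⟩
  · exact (tplus_iso h0).trans (tplus_forest_iso h₁ hc₁)
  · exact (tplus_iso hn).trans (tplus_forest_iso h₂ hc₂)
  · rcases hstep i hi with h | h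
    · exact Or.inl (tplus_largeEmb h)
    · exact Or.inr (tplus_largeEmb h)

end MonoUnary
namespace MonoUnary

theorem forest_path_of_hasPath {T₁ T₂ : MonoUnary}
    (h₁ : Connected T₁) (h₂ : Connected T₂) {c₁ : T₁.carrier} {c₂ : T₂.carrier}
    (hc₁ : T₁.op c₁ = c₁) (hc₂ : T₂.op c₂ = c₂)
    (hcard₁ : ∃ x : T₁.carrier, x ≠ c₁) (hcard₂ : ∃ x : T₂.carrier, x ≠ c₂) (n : ℕ)
    (h : HasPath T₁ T₂ n) : HasPath (forestOf T₁ c₁) (forestOf T₂ c₂) n := by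
  classical
  obtain ⟨C, h0, hn, hstep⟩ := h
  set P : ℕ → Prop := fun j => ¬ AllPer (C j) with hPdef
  have hP0 : P 0 := fun h => not_allPer_tree h₁ hc₁ hcard₁ ((allPer_iso h0).1 h)
  have hPn : P n := fun h => not_allPer_tree h₂ hc₂ hcard₂ ((allPer_iso hn).1 h)
  -- the nearest non-all-periodic indices to the left and right
  set l : ℕ → ℕ := fun i => Nat.findGreatest P i with hldef
  have hl_le : ∀ i, l i ≤ i := fun i => Nat.findGreatest_le i
  have hlP : ∀ i, P (l i) := fun i => Nat.findGreatest_spec (Nat.zero_le i) hP0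
  have hl_between : ∀ i j, l i < j → j ≤ i → ¬ P j :=
    fun i j hj hj' => Nat.findGreatest_is_greatest hj hj'
  have hl_self : ∀ i, P i → l i = i := by
    intro i h
    apply Nat.findGreatest_eq_iff.2
    exact ⟨le_rfl, fun _ => h, fun k h1 h2 => absurd (h1.trans_le h2) (lt_irrefl i)⟩
  have hl_eq : ∀ i, ¬ P (i+1) → l (i+1) = l i := by
    intro i h
    show Nat.findGreatest P (i+1) = Nat.findGreatest P i
    rw [Nat.findGreatest_succ, if_neg h]
  have hl_succ : ∀ i, P i → ¬ P (i+1) → l (i+1) = i := by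
    intro i h h'
    rw [hl_eq i h', hl_self i h]
  have hH : ∀ i, ∃ j, i < j ∧ P (min j n) := by
    intro i
    exact ⟨n + i + 1, by omega, by rw [min_eq_right (by omega)]; exact hPn⟩
  set r : ℕ → ℕ := fun i => Nat.find (hH i) with hrdef
  have hr_spec : ∀ i, i < r i ∧ P (min (r i) n) := fun i => Nat.find_spec (hH i)
  have hr_le : ∀ i, i < n → r i ≤ n :=
    fun i hi => Nat.find_le ⟨hi, by rw [min_self]; exact hPn⟩
  have hrP : ∀ i, i < n → P (r i) := by
    intro i hi
    have h2 := (hr_spec i).2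
    rwa [min_eq_left (hr_le i hi)] at h2
  have hr_between : ∀ i j, i < n → i < j → j < r i → ¬ P j := by
    intro i j hi hij hjr hPj
    exact Nat.find_min (hH i) hjr ⟨hij, by
      rwa [min_eq_left (le_of_lt (lt_of_lt_of_le hjr (hr_le i hi)))]⟩
  have hr_succ : ∀ i, i < n → P (i+1) → r i = i + 1 := by
    intro i hi h
    apply (Nat.find_eq_iff (hH i)).2
    constructor
    · exact ⟨lt_add_one i, by rw [min_eq_left (by omega)]; exact h⟩
    · intro m hm hcon
      omega
  have hr_eq : ∀ i, i < n → ¬ P (i+1) → r (i+1) = r i := by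
    intro i hi h
    apply (Nat.find_eq_iff (hH (i+1))).2
    have hri : i < r i := (hr_spec i).1
    have hrine : r i ≠ i + 1 := fun hcon => h (hcon ▸ hrP i hi)
    constructor
    · refine ⟨by omega, ?_⟩
      rw [min_eq_left (hr_le i hi)]
      exact hrP i hi
    · intro m hm hcon
      obtain ⟨h1, h2⟩ := hcon
      have hmn : m ≤ n := le_of_lt (lt_of_lt_of_le hm (hr_le i hi))
      rw [min_eq_left hmn] at h2
      exact hr_between i m hi (by omega) hm h2
  -- the single-generation facts at segment boundaries
  have hsgen_r : ∀ i, 0 < i → i < n → ¬ P i → SGen (gforest (C (r i))) := by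
    intro i hi0 hin hPi
    have hjle := hr_le i hin
    have hjgt : i < r i := (hr_spec i).1
    have hjP : P (r i) := hrP i hin
    have hAP : AllPer (C (r i - 1)) := by
      by_cases hji : r i - 1 = i
      · rw [hji]; exact not_not.1 hPi
      · have := hr_between i (r i - 1) hin (by omega) (by omega)
        exact not_not.1 this
    have hstep' := hstep (r i - 1) (by omega)
    have hidx : r i - 1 + 1 = r i := by omega
    rw [hidx] at hstep'
    rcases hstep' with h | h
    · exact sgen_gforest hAP hjP h
    · exact absurd (allPer_of_largeEmb h hAP) hjP
  have hsgen_l : ∀ i, 0 < i → i < n → ¬ P i → SGen (gforest (C (l i))) := by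
    intro i hi0 hin hPi
    have hjP : P (l i) := hlP i
    have hjlt : l i < i := by
      have := hl_le i
      rcases Nat.lt_or_ge (l i) i with h | h
      · exact h
      · exact absurd (le_antisymm this h ▸ hjP) hPi
    have hAP : AllPer (C (l i + 1)) := by
      by_cases hji : l i + 1 = i
      · rw [hji]; exact not_not.1 hPi
      · have := hl_between i (l i + 1) (lt_add_one _) (by omega)
        exact not_not.1 this
    have hstep' := hstep (l i) (by omega)
    rcases hstep' with h | h
    · exact absurd (allPer_of_largeEmb h (not_not.1 (fun hq => hq hAP))) hjP
    · exact sgen_gforest hAP hjP h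
  -- the transformed path
  refine ⟨fun i => if P i then gforest (C i) else
    msum (gforest (C (l i))) (gforest (C (r i))), ?_, ?_, fun i hi => ?_⟩
  · simp only [if_pos hP0]
    exact (gforest_iso h0).trans (gforest_tree_iso h₁ hc₁)
  · simp only [if_pos hPn]
    exact (gforest_iso hn).trans (gforest_tree_iso h₂ hc₂)
  · by_cases hPi : P i <;> by_cases hPi1 : P (i+1)
    · simp only [if_pos hPi, if_pos hPi1]
      rcases hstep i hi with h | h
      · exact Or.inl (gforest_largeEmb hPi h)
      · exact Or.inr (gforest_largeEmb hPi1 h)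
    · -- entering an all-periodic segment
      have hi1n : i + 1 < n := by
        rcases Nat.lt_or_ge (i+1) n with h | h
        · exact h
        · have : i + 1 = n := by omega
          exact absurd (this ▸ hPn) hPi1
      simp only [if_pos hPi, if_neg hPi1]
      rw [hl_succ i hPi hPi1]
      exact Or.inl (largeEmb_msum_left _ _ (gforest_nonempty hPi)
        (hsgen_r (i+1) (by omega) hi1n hPi1))
    · -- leaving an all-periodic segment
      have hi0 : 0 < i := by
        rcases Nat.eq_zero_or_pos i with h | h
        · exact absurd (h ▸ hP0) hPi
        · exact h
      simp only [if_neg hPi, if_pos hPi1]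
      rw [hr_succ i hi hPi1]
      exact Or.inr (largeEmb_msum_right _ _ (gforest_nonempty hPi1)
        (hsgen_l i hi0 hi hPi))
    · -- inside an all-periodic segment
      simp only [if_neg hPi, if_neg hPi1]
      rw [hl_eq i hPi1, hr_eq i hi hPi1]
      apply step_self
      obtain ⟨x⟩ := gforest_nonempty (hlP i)
      exact ⟨Sum.inl x⟩

end MonoUnary
open MonoUnary in
/-- if `T₁`, `T₂` are tree-algebras (connected monounary algebras with a
fixed point `c₁` resp. `c₂` of the operation, the root) having at least two elements,
then the distance between them equals the distance between their associated
forest-algebras. -/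
theorem dis_tree_eq_dis_forest (T₁ T₂ : MonoUnary)
    (h₁ : Connected T₁) (h₂ : Connected T₂)
    (c₁ : T₁.carrier) (c₂ : T₂.carrier) (hc₁ : T₁.op c₁ = c₁) (hc₂ : T₂.op c₂ = c₂)
    (hcard₁ : ∃ x : T₁.carrier, x ≠ c₁) (hcard₂ : ∃ x : T₂.carrier, x ≠ c₂) :
    dis T₁ T₂ = dis (forestOf T₁ c₁) (forestOf T₂ c₂) := by
  have hiff : ∀ n, HasPath T₁ T₂ n ↔ HasPath (forestOf T₁ c₁) (forestOf T₂ c₂) n :=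
    fun n => ⟨forest_path_of_hasPath h₁ h₂ hc₁ hc₂ hcard₁ hcard₂ n,
      hasPath_of_forest_path h₁ h₂ hc₁ hc₂ n⟩
  unfold dis
  congr 1
  ext q
  constructor
  · rintro ⟨n, rfl, hp⟩
    exact ⟨n, rfl, (hiff n).mp hp⟩
  · rintro ⟨n, rfl, hp⟩
    exact ⟨n, rfl, (hiff n).mpr hp⟩
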